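/- arXiv:1302.6908 — 2 statements merged into one kernel-verified Lean document; each statement's English description precedes it below -/
import Mathlib

section
/- Let p ∈ H[1, n], i.e., p(z) = 1 + a_n z^n + ... analytic in the unit disk U. Suppose there exists z_0 ∈ U such that Re(p(z)) > 0 for |z| < |z_0|, Re(p(z_0)) = 0, and p(z_0) ≠ 0. Then z_0 p'(z_0)/p(z_0) = i l for some real number l with |l| ≥ n. -/
open Complex Metric Function Set Filter

-- aux lemma 1: analyticity of iterated dslope
lemma aux_dslope_analytic {f : ℂ → ℂ} {s : Set ℂ} (hf : AnalyticOnNhd ℂ f s) :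
    AnalyticOnNhd ℂ (dslope f 0) s := by
  intro z hz
  rcases eq_or_ne z 0 with rfl | hne
  · rcases hf 0 hz with ⟨ps, hps⟩
    exact ⟨ps.fslope, hps.has_fpower_series_dslope_fslope⟩
  · have h1 : AnalyticAt ℂ (fun w => (w - 0)⁻¹ • (f w - f 0)) z := by
      refine AnalyticAt.smul (f := fun w : ℂ => (w - 0)⁻¹) (g := fun w => f w - f 0) ?_ ?_
      · exact ((analyticAt_id.sub analyticAt_const).inv (by simpa using hne))
      · exact (hf z hz).sub analyticAt_const
    exact h1.congr (dslope_eventuallyEq_slope_of_ne f hne).symm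

lemma aux_iter_dslope_analytic {f : ℂ → ℂ} {s : Set ℂ} (hf : AnalyticOnNhd ℂ f s) (k : ℕ) :
    AnalyticOnNhd ℂ ((swap dslope 0)^[k] f) s := by
  induction k generalizing f with
  | zero => exact hf
  | succ k ih =>
    rw [Function.iterate_succ_apply]
    exact ih (aux_dslope_analytic hf)

lemma aux_factor (f : ℂ → ℂ) (k : ℕ)
    (hc : ∀ j, j < k → (swap dslope 0)^[j] f 0 = 0) (z : ℂ) :
    f z = z ^ k * (swap dslope 0)^[k] f z := by
  induction k with
  | zero => simp
  | succ k ih =>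
    have hk := ih (fun j hj => hc j (hj.trans (Nat.lt_succ_self k)))
    rcases eq_or_ne z 0 with rfl | hz
    · have h0 : f 0 = 0 := hc 0 (Nat.succ_pos k)
      simp [h0]
    · rw [Function.iterate_succ_apply', swap]
      rw [dslope_of_ne _ hz, slope_def_field, hc k (Nat.lt_succ_self k)]
      rw [hk]
      field_simp
      ring

lemma aux_dslope_zero {f : ℂ → ℂ} (hf : AnalyticAt ℂ f 0) (j : ℕ)
    (h : iteratedDeriv j f 0 = 0) : (swap dslope 0)^[j] f 0 = 0 := by
  rcases hf with ⟨ps, hps⟩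
  have h1 : (swap dslope 0)^[j] f 0 = ps.coeff j := by
    have := (hps.has_fpower_series_iterate_dslope_fslope j).coeff_zero (fun _ => 1)
    rw [← this]
    simpa using (FormalMultilinearSeries.coeff_iterate_fslope (p := ps) j 0).symm
  rw [h1]
  rcases hps with ⟨r, hball⟩
  have h2 := hball.factorial_smul (1 : ℂ) j
  rw [← iteratedDeriv, h] at h2
  have h3 : (Nat.factorial j : ℂ) * ps.coeff j = 0 := by
    rw [FormalMultilinearSeries.coeff, ← nsmul_eq_mul]
    exact h2
  have hj : (Nat.factorial j : ℂ) ≠ 0 := by exact_mod_cast Nat.factorial_ne_zero j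
  exact (mul_eq_zero.mp h3).resolve_left hj

lemma aux_normSq_deriv {f : ℝ → ℂ} {f' : ℂ} {t : ℝ} (hf : HasDerivAt f f' t) :
    HasDerivAt (fun s => Complex.normSq (f s)) (2 * ((starRingEnd ℂ) (f t) * f').re) t := by
  have hre : HasDerivAt (fun s => (f s).re) f'.re t :=
    Complex.reCLM.hasFDerivAt.comp_hasDerivAt t hf
  have him : HasDerivAt (fun s => (f s).im) f'.im t :=
    Complex.imCLM.hasFDerivAt.comp_hasDerivAt t hf
  have h := (hre.mul hre).add (him.mul him)
  have e1 : (fun s => Complex.normSq (f s)) =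
      fun s => (f s).re * (f s).re + (f s).im * (f s).im := by
    funext s; rw [Complex.normSq_apply]
  have e2 : 2 * ((starRingEnd ℂ) (f t) * f').re =
      f'.re * (f t).re + (f t).re * f'.re + (f'.im * (f t).im + (f t).im * f'.im) := by
    rw [Complex.mul_re, Complex.conj_re, Complex.conj_im]; ring
  rw [e1, e2]; exact h

lemma aux_left_deriv_nonneg {u : ℝ → ℝ} {d : ℝ} (hu : HasDerivAt u d 1)
    (hle : ∀ t, 0 ≤ t → t < 1 → u t ≤ u 1) : 0 ≤ d := by
  have h := hasDerivAt_iff_tendsto_slope.mp hu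
  have h' : Tendsto (slope u 1) (nhdsWithin 1 (Iio 1)) (nhds d) :=
    h.mono_left (nhdsWithin_mono 1 (fun x hx => ne_of_lt hx))
  refine ge_of_tendsto h' ?_
  filter_upwards [Ioo_mem_nhdsLT_of_mem (Set.mem_Ioc.mpr ⟨(by norm_num : (0:ℝ) < 1), le_refl 1⟩)] with t ht
  rw [slope_def_field]
  have h1 : u t - u 1 ≤ 0 := by linarith [hle t ht.1.le ht.2]
  have h2 : t - 1 < 0 := by linarith [ht.2]
  exact div_nonneg_of_nonpos h1 h2.le

lemma aux_norm_le {v : ℂ} (hv : 0 ≤ v.re) : ‖1 - v‖ ≤ ‖1 + v‖ := by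
  have e : ∀ x : ℂ, ‖x‖^2 = Complex.normSq x := fun x => by
    rw [Complex.sq_norm]
  have h1 : ‖1 - v‖^2 ≤ ‖1 + v‖^2 := by
    rw [e, e]
    simp only [Complex.normSq_apply, Complex.sub_re, Complex.sub_im, Complex.add_re,
      Complex.add_im, Complex.one_re, Complex.one_im]
    nlinarith
  nlinarith [norm_nonneg (1 - v), norm_nonneg (1 + v)]

lemma aux_norm_eq {v : ℂ} (hv : v.re = 0) : ‖1 - v‖ = ‖1 + v‖ := by
  have e : ∀ x : ℂ, ‖x‖^2 = Complex.normSq x := fun x => by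
    rw [Complex.sq_norm]
  have h1 : ‖1 - v‖^2 = ‖1 + v‖^2 := by
    rw [e, e]
    simp only [Complex.normSq_apply, Complex.sub_re, Complex.sub_im, Complex.add_re,
      Complex.add_im, Complex.one_re, Complex.one_im, hv]
    ring
  nlinarith [norm_nonneg (1 - v), norm_nonneg (1 + v)]

theorem nunokawa_corollary (p : ℂ → ℂ) (n : ℕ) (hn : 1 ≤ n)
    (hp : AnalyticOnNhd ℂ p (ball (0:ℂ) 1))
    (hp0 : p 0 = 1)
    (hcoef : ∀ k : ℕ, 1 ≤ k → k < n → iteratedDeriv k p 0 = 0)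
    (z₀ : ℂ) (hz₀ : z₀ ∈ ball (0:ℂ) 1)
    (hre : ∀ z : ℂ, ‖z‖ < ‖z₀‖ → 0 < (p z).re)
    (hre0 : (p z₀).re = 0) (hne : p z₀ ≠ 0) :
    ∃ l : ℝ, z₀ * deriv p z₀ / p z₀ = (l : ℂ) * I ∧ (n : ℝ) ≤ |l| := by
  classical
  set r : ℝ := ‖z₀‖ with hr_def
  have hz0ne : z₀ ≠ 0 := by
    rintro rfl
    rw [hp0] at hre0
    simp at hre0
  have hr0 : 0 < r := norm_pos_iff.mpr hz0ne
  have hr1 : r < 1 := by simpa [hr_def] using mem_ball_zero_iff.mp hz₀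
  have hsub : closedBall (0:ℂ) r ⊆ ball (0:ℂ) 1 := closedBall_subset_ball hr1
  -- nonnegativity of Re p on the closed ball
  have hReCl : ∀ z ∈ closedBall (0:ℂ) r, 0 ≤ (p z).re := by
    intro z hz
    have hzr : ‖z‖ ≤ r := mem_closedBall_zero_iff.mp hz
    have hcont : ContinuousAt p z := (hp z (hsub hz)).continuousAt
    have hbase : Tendsto (fun t : ℝ => (t : ℂ) * z) (nhds 1) (nhds z) := by
      have h := (by fun_prop : Continuous fun t : ℝ => (t : ℂ) * z).tendsto (1 : ℝ)
      convert h using 2; simp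
    have htend : Tendsto (fun t : ℝ => (p ((t : ℂ) * z)).re) (nhdsWithin 1 (Iio 1)) (nhds (p z).re) :=
      ((Complex.continuous_re.tendsto _).comp (hcont.tendsto.comp hbase)).mono_left
        nhdsWithin_le_nhds
    refine ge_of_tendsto htend ?_
    filter_upwards [Ioo_mem_nhdsLT_of_mem
      (Set.mem_Ioc.mpr ⟨(by norm_num : (0:ℝ) < 1), le_refl 1⟩)] with t ht
    refine (hre _ ?_).le
    have hnorm : ‖(t : ℂ) * z‖ = t * ‖z‖ := by
      rw [norm_mul, Complex.norm_real, Real.norm_eq_abs, _root_.abs_of_pos ht.1]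
    rw [hnorm]
    calc t * ‖z‖ ≤ t * r := by exact mul_le_mul_of_nonneg_left hzr ht.1.le
    _ < r := by nlinarith [ht.2]
  have h1p : ∀ z ∈ closedBall (0:ℂ) r, 1 + p z ≠ 0 := by
    intro z hz h
    have h2 : (1 + p z).re = 0 := by rw [h]; simp
    simp only [Complex.add_re, Complex.one_re] at h2
    linarith [hReCl z hz]
  have hz₀cb : z₀ ∈ closedBall (0:ℂ) r := by simp [hr_def]
  have h1A : 1 + p z₀ ≠ 0 := h1p z₀ hz₀cb
  -- the function w and its factorization
  set q : ℂ → ℂ := fun z => p z - 1 with hq_def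
  have hq : AnalyticOnNhd ℂ q (ball (0:ℂ) 1) := hp.sub analyticOnNhd_const
  have hqc : ∀ j, j < n → (swap dslope 0)^[j] q 0 = 0 := by
    intro j hj
    apply aux_dslope_zero (hq 0 (by simp))
    cases j with
    | zero => simp [hq_def, hp0]
    | succ m =>
      have hder : deriv q = deriv p := by
        funext x
        simp only [hq_def]
        exact deriv_sub_const 1
      rw [iteratedDeriv_succ', hder, ← iteratedDeriv_succ']
      exact hcoef (m+1) (Nat.succ_le_succ (Nat.zero_le m)) hj
  set hh : ℂ → ℂ := (swap dslope 0)^[n] q with hh_def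
  have hfac : ∀ z, q z = z ^ n * hh z := aux_factor q n hqc
  set w : ℂ → ℂ := fun z => (1 - p z) / (1 + p z) with hw_def
  set g : ℂ → ℂ := fun z => -hh z / (1 + p z) with hg_def
  have hwg : ∀ z, 1 + p z ≠ 0 → w z = z ^ n * g z := by
    intro z hzne
    have hq1 : (1 : ℂ) - p z = -(z ^ n * hh z) := by
      rw [← hfac]; simp only [hq_def]; ring
    simp only [hw_def, hg_def, hq1]
    field_simp
  -- bounds on w
  have hwle : ∀ z ∈ closedBall (0:ℂ) r, ‖w z‖ ≤ 1 := by
    intro z hz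
    simp only [hw_def, norm_div]
    rw [div_le_one (norm_pos_iff.mpr (h1p z hz))]
    exact aux_norm_le (hReCl z hz)
  have hw1 : ‖w z₀‖ = 1 := by
    simp only [hw_def, norm_div]
    rw [div_eq_one_iff_eq (norm_ne_zero_iff.mpr h1A)]
    exact aux_norm_eq hre0
  -- analyticity of g on an open set containing the closed ball
  set V : Set ℂ := ball (0:ℂ) 1 ∩ (fun z => 1 + p z) ⁻¹' {(0:ℂ)}ᶜ with hV_def
  have hVopen : IsOpen V := by
    apply ContinuousOn.isOpen_inter_preimage ?_ isOpen_ball isOpen_compl_singleton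
    exact (continuousOn_const.add (hp.continuousOn))
  have hg_an : AnalyticOnNhd ℂ g V := by
    intro z hz
    exact ((aux_iter_dslope_analytic hq n z hz.1).neg).div
      (analyticAt_const.add (hp z hz.1)) hz.2
  have hBV : closedBall (0:ℂ) r ⊆ V := by
    intro z hz
    exact ⟨hsub hz, h1p z hz⟩
  -- max modulus bound on g
  have hgb : ∀ z ∈ closedBall (0:ℂ) r, ‖g z‖ ≤ 1 / r ^ n := by
    intro z hz
    have hdc : DiffContOnCl ℂ g (ball (0:ℂ) r) := by
      constructor
      · exact fun x hx => (hg_an x (hBV (ball_subset_closedBall hx))).differentiableAt.differentiableWithinAt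
      · rw [closure_ball (0:ℂ) hr0.ne']
        exact fun x hx => (hg_an x (hBV hx)).continuousAt.continuousWithinAt
    refine Complex.norm_le_of_forall_mem_frontier_norm_le isBounded_ball hdc ?_ ?_
    · intro x hx
      rw [frontier_ball (0:ℂ) hr0.ne'] at hx
      have hxr : ‖x‖ = r := by simpa using mem_sphere_zero_iff_norm.mp hx
      have hxcb : x ∈ closedBall (0:ℂ) r := by
        rw [mem_closedBall_zero_iff, hxr]
      have hwx := hwle x hxcb
      rw [hwg x (h1p x hxcb), norm_mul, norm_pow, hxr] at hwx
      rw [le_div_iff₀ (by positivity)]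
      linarith [hwx]
    · rw [closure_ball (0:ℂ) hr0.ne']
      exact hz
  -- radial bound on w
  have hwt : ∀ t : ℝ, 0 ≤ t → t ≤ 1 → ‖w ((t : ℂ) * z₀)‖ ≤ t ^ n := by
    intro t ht0 ht1
    have hnorm : ‖(t : ℂ) * z₀‖ = t * r := by
      rw [norm_mul, Complex.norm_real, Real.norm_eq_abs, _root_.abs_of_nonneg ht0]
    have hmem : (t : ℂ) * z₀ ∈ closedBall (0:ℂ) r := by
      rw [mem_closedBall_zero_iff, hnorm]
      nlinarith
    rw [hwg _ (h1p _ hmem), norm_mul, norm_pow, hnorm]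
    have := hgb _ hmem
    calc (t * r) ^ n * ‖g ((t:ℂ) * z₀)‖ ≤ (t * r) ^ n * (1 / r ^ n) := by
          apply mul_le_mul_of_nonneg_left this (by positivity)
      _ = t ^ n := by
          rw [mul_pow]; field_simp
  -- derivative setup
  have hDp : HasDerivAt p (deriv p z₀) z₀ := (hp z₀ hz₀).differentiableAt.hasDerivAt
  set D : ℂ := deriv p z₀ with hD_def
  set A : ℂ := p z₀ with hA_def
  set W : ℂ := ((0 - D) * (1 + A) - (1 - A) * (0 + D)) / (1 + A) ^ 2 with hW_def
  have hW : HasDerivAt w W z₀ :=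
    ((hasDerivAt_const z₀ (1:ℂ)).sub hDp).div ((hasDerivAt_const z₀ (1:ℂ)).add hDp) h1A
  -- radial real derivative
  have hmul : HasDerivAt (fun s : ℂ => s * z₀) z₀ 1 := by
    simpa using (hasDerivAt_id (1:ℂ)).mul_const z₀
  have hWz : HasDerivAt w W ((1:ℂ) * z₀) := by rwa [one_mul]
  have hcomp : HasDerivAt (fun s : ℂ => w (s * z₀)) (W * z₀) 1 := by
    exact hWz.comp (1:ℂ) hmul
  have hf1 : HasDerivAt (fun t : ℝ => w ((t:ℂ) * z₀)) (W * z₀) 1 :=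
    HasDerivAt.comp_ofReal (by rw [Complex.ofReal_one]; exact hcomp)
  have hF := aux_normSq_deriv hf1
  rw [show (((1:ℝ):ℂ) * z₀) = z₀ by push_cast; ring] at hF
  set K : ℂ := (starRingEnd ℂ) (w z₀) * (W * z₀) with hK_def
  have hnormSq1 : Complex.normSq (w z₀) = 1 := by
    have h : ‖w z₀‖^2 = 1 := by rw [hw1]; norm_num
    rw [← h, Complex.sq_norm]
  have hu : HasDerivAt (fun t : ℝ => Complex.normSq (w ((t:ℂ) * z₀)) - t ^ (2*n))
      (2 * K.re - 2*n) 1 := by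
    have hpow : HasDerivAt (fun t : ℝ => t ^ (2*n)) (((2*n : ℕ) : ℝ) * (1:ℝ)^(2*n-1)) 1 :=
      hasDerivAt_pow (2*n) 1
    have := hF.sub hpow
    simpa [Pi.sub_def] using this
  have hKre : (n : ℝ) ≤ K.re := by
    have h0 : 0 ≤ 2 * K.re - 2 * n := by
      apply aux_left_deriv_nonneg hu
      intro t ht0 ht1
      have hb := hwt t ht0 ht1.le
      have h1 : Complex.normSq (w ((t:ℂ)*z₀)) ≤ t^(2*n) := by
        have h2 : ‖w ((t:ℂ)*z₀)‖^2 ≤ (t^n)^2 := by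
          nlinarith [norm_nonneg (w ((t:ℂ)*z₀))]
        rw [Complex.sq_norm] at h2
        calc Complex.normSq (w ((t:ℂ)*z₀)) ≤ (t^n)^2 := h2
          _ = t^(2*n) := by rw [← pow_mul, mul_comm]
      have h2 : Complex.normSq (w (((1:ℝ):ℂ)*z₀)) = 1 := by
        rw [show (((1:ℝ):ℂ) * z₀) = z₀ by push_cast; ring, hnormSq1]
      simp only [h2, one_pow]
      linarith
    linarith
  -- tangential derivative : K is real
  have hexp : HasDerivAt (fun s : ℂ => z₀ * Complex.exp (s * I)) (z₀ * I) 0 := by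
    have h1 : HasDerivAt (fun s : ℂ => s * I) I 0 := by
      simpa using (hasDerivAt_id (0:ℂ)).mul_const I
    have h2 : HasDerivAt Complex.exp (Complex.exp ((0:ℂ) * I)) ((0:ℂ)*I) :=
      Complex.hasDerivAt_exp _
    have h3 := h2.comp (0:ℂ) h1
    have h4 := h3.const_mul z₀
    simpa using h4
  have hWz0 : HasDerivAt w W (z₀ * Complex.exp ((0:ℂ) * I)) := by
    rwa [show z₀ * Complex.exp ((0:ℂ)*I) = z₀ by simp]
  have hcomp2 : HasDerivAt (fun s : ℂ => w (z₀ * Complex.exp (s * I))) (W * (z₀ * I)) 0 := by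
    exact hWz0.comp (0:ℂ) hexp
  have hf2 : HasDerivAt (fun θ : ℝ => w (z₀ * Complex.exp ((θ:ℂ) * I))) (W * (z₀ * I)) 0 :=
    HasDerivAt.comp_ofReal (by rw [Complex.ofReal_zero]; exact hcomp2)
  have hG := aux_normSq_deriv hf2
  rw [show z₀ * Complex.exp ((((0:ℝ)):ℂ) * I) = z₀ by simp] at hG
  have hGmax : IsLocalMax (fun θ : ℝ => Complex.normSq (w (z₀ * Complex.exp ((θ:ℂ) * I)))) 0 := by
    apply Filter.Eventually.of_forall
    intro θ
    simp only
    rw [show z₀ * Complex.exp ((((0:ℝ)):ℂ) * I) = z₀ by simp, hnormSq1]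
    have hmem : z₀ * Complex.exp ((θ:ℂ) * I) ∈ closedBall (0:ℂ) r := by
      rw [mem_closedBall_zero_iff, norm_mul]
      have : ‖Complex.exp ((θ:ℂ) * I)‖ = 1 := by
        rw [Complex.norm_exp]
        simp
      rw [this, mul_one]
    have hb := hwle _ hmem
    have : Complex.normSq (w (z₀ * Complex.exp ((θ:ℂ) * I))) ≤ 1 := by
      have h2 : ‖w (z₀ * Complex.exp ((θ:ℂ) * I))‖^2 ≤ 1 := by
        nlinarith [norm_nonneg (w (z₀ * Complex.exp ((θ:ℂ) * I)))]
      rw [Complex.sq_norm] at h2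
      exact h2
    exact this
  have hIm0 := hGmax.hasDerivAt_eq_zero hG
  have hKim : K.im = 0 := by
    have hKI : (starRingEnd ℂ) (w z₀) * (W * (z₀ * I)) = K * I := by
      rw [hK_def]; ring
    rw [hKI] at hIm0
    rw [Complex.mul_I_re] at hIm0
    linarith
  -- K is a nonneg real ≥ n
  set k : ℝ := K.re with hk_def
  have hKreal : K = (k : ℂ) := Complex.ext (by simp [hk_def]) (by simp [hKim])
  have hcw : (starRingEnd ℂ) (w z₀) * w z₀ = 1 := by
    rw [mul_comm, Complex.mul_conj, hnormSq1, Complex.ofReal_one]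
  have hWzeq : W * z₀ = (k:ℂ) * w z₀ := by
    rw [← hKreal, hK_def]
    linear_combination (-(W*z₀)) * hcw
  set ρ : ℝ := (p z₀).im with hρ_def
  have hA : A = (ρ:ℝ) * I := by
    rw [hA_def, ← Complex.re_add_im (p z₀), hre0]
    simp [hρ_def]
  have hρne : ρ ≠ 0 := by
    intro h
    apply hne
    rw [hA, h]
    simp
  have hwz₀ : w z₀ = (1 - A)/(1 + A) := rfl
  have hmain : -2 * D * z₀ = (k:ℂ) * (1 - A^2) := by
    have h6 := hWzeq
    rw [hW_def, hwz₀] at h6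
    field_simp at h6
    have h7 : (1 + A) * (-2 * D * z₀) = (1 + A) * ((k:ℂ) * (1 - A^2)) := by
      linear_combination (1 + A) * h6
    exact mul_left_cancel₀ h1A h7
  have hksq : A^2 = -((ρ:ℂ)^2) := by
    rw [hA, mul_pow, Complex.I_sq]
    ring
  have hzD : z₀ * D = -(((k:ℂ) * (1 + (ρ:ℂ)^2))/2) := by
    linear_combination (-(1:ℂ)/2) * hmain + ((k:ℂ)/2) * hksq
  refine ⟨k * (1 + ρ^2) / (2 * ρ), ?_, ?_⟩
  · rw [div_eq_iff hne, hA]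
    have hρc : ((ρ:ℝ):ℂ) ≠ 0 := Complex.ofReal_ne_zero.mpr hρne
    push_cast
    have hX : ((k:ℂ) * (1 + (ρ:ℂ)^2)/(2*(ρ:ℂ))) * I * ((ρ:ℂ) * I) = -(((k:ℂ) * (1 + (ρ:ℂ)^2))/2) := by
      field_simp
      linear_combination ((k:ℂ) * (1 + (ρ:ℂ)^2)) * Complex.I_sq
    rw [hX]
    exact hzD
  · have hk1 : (1:ℝ) ≤ k := le_trans (by exact_mod_cast hn) hKre
    have h2ρ : 0 < |ρ| := abs_pos.mpr hρne
    have habs : |k * (1 + ρ^2)/(2*ρ)| = k * (1 + ρ^2)/(2*|ρ|) := by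
      rw [_root_.abs_div, _root_.abs_mul, _root_.abs_mul]
      rw [_root_.abs_of_pos (by linarith : (0:ℝ) < k),
        _root_.abs_of_pos (by positivity : (0:ℝ) < 1 + ρ^2),
        _root_.abs_of_pos (by norm_num : (0:ℝ) < 2)]
    rw [habs, le_div_iff₀ (by positivity)]
    nlinarith [sq_nonneg (|ρ| - 1), _root_.sq_abs ρ, hKre, Nat.cast_nonneg (α := ℝ) n]
end

section
/- Let p be analytic at z_0 ∈ ℂ, z_0 ≠ 0, with p(z_0) = iβ for real β ≠ 0, a_0 > 0 real, and suppose −2a_0 z_0 p'(z_0)/(a_0² + β²) = m for some real m ≥ n > 0. Then z_0 p'(z_0) = −(m/2)(a_0 + β²/a_0) is real, and writing z_0 p'(z_0)/p(z_0) = i l with l real, one has l = (m/(2β))(a_0 + β²/a_0). -/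
open Complex

theorem algebraic_core (p : ℂ → ℂ) (z₀ : ℂ) (hz₀ : z₀ ≠ 0) (hpa : AnalyticAt ℂ p z₀)
    (β : ℝ) (hβ : β ≠ 0) (hpz₀ : p z₀ = (β : ℂ) * I)
    (a₀ : ℝ) (ha₀ : 0 < a₀) (m n : ℝ) (hn : 0 < n) (hm : n ≤ m)
    (hmain : -2 * (a₀ : ℂ) * z₀ * deriv p z₀ / (((a₀ ^ 2 + β ^ 2 : ℝ)) : ℂ) = (m : ℂ)) :
    z₀ * deriv p z₀ = ((-(m / 2) * (a₀ + β ^ 2 / a₀) : ℝ) : ℂ) ∧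
    ∃ l : ℝ, z₀ * deriv p z₀ / p z₀ = (l : ℂ) * I ∧
      l = m / (2 * β) * (a₀ + β ^ 2 / a₀) := by
  have ha₀' : (a₀ : ℂ) ≠ 0 := by exact_mod_cast ha₀.ne'
  have hβ' : (β : ℂ) ≠ 0 := by exact_mod_cast hβ
  have hden : ((a₀ ^ 2 + β ^ 2 : ℝ) : ℂ) ≠ 0 := by
    have : (0:ℝ) < a₀ ^ 2 + β ^ 2 := by positivity
    exact_mod_cast this.ne'
  have h := (div_eq_iff hden).mp hmain
  push_cast at h
  have key : z₀ * deriv p z₀ = ((-(m / 2) * (a₀ + β ^ 2 / a₀) : ℝ) : ℂ) := by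
    push_cast
    field_simp
    linear_combination -h
  refine ⟨key, m / (2 * β) * (a₀ + β ^ 2 / a₀), ?_, rfl⟩
  rw [key, hpz₀]
  have hI : I ≠ 0 := I_ne_zero
  rw [div_eq_iff (mul_ne_zero hβ' hI)]
  push_cast
  field_simp
  linear_combination (-(m:ℂ) * ((a₀:ℂ)^2 + (β:ℂ)^2)) * Complex.I_sq
end
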